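/- arXiv:2306.15415 — 2 statements merged into one kernel-verified Lean document; each statement's English description precedes it below -/
import Mathlib

section
/- The product of the phase gate diag(1,1,−ω^k,−ω^k) (a phase gate [[1,0],[0,−ω^k]] on the first qubit) followed by RBS(−π/4), when restricted to the unary subspace spanned by {|01⟩,|10⟩}, equals the scaled radix-2 butterfly matrix (1/√2)·[[1, ω^k],[1, −ω^k]]. -/
open Matrix

/-- The RBS gate as a complex 4×4 matrix. -/
noncomputable def RBSC (θ : ℝ) : Matrix (Fin 4) (Fin 4) ℂ :=
  !![1, 0, 0, 0;
     0, (Real.cos θ : ℂ), (Real.sin θ : ℂ), 0;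
     0, -(Real.sin θ : ℂ), (Real.cos θ : ℂ), 0;
     0, 0, 0, 1]

/-- Phase gate [[1,0],[0,−w]] on the first qubit of two qubits: diag(1, 1, −w, −w). -/
noncomputable def phaseGate (w : ℂ) : Matrix (Fin 4) (Fin 4) ℂ :=
  !![1, 0, 0, 0;
     0, 1, 0, 0;
     0, 0, -w, 0;
     0, 0, 0, -w]

/-- Restriction of a 4×4 matrix to the unary subspace span{|01⟩,|10⟩}
(the middle two rows and columns). -/
def unaryBlock (M : Matrix (Fin 4) (Fin 4) ℂ) : Matrix (Fin 2) (Fin 2) ℂ :=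
  !![M 1 1, M 1 2;
     M 2 1, M 2 2]

/-- The phase gate diag(1,1,−ω^k,−ω^k) followed by RBS(−π/4), restricted to the unary
subspace, equals the scaled radix-2 butterfly (1/√2)·[[1, ω^k],[1, −ω^k]],
where ω = e^{2πi/n}. -/
theorem radix2_butterfly (n : ℕ) (hn : 0 < n) (k : ℕ) :
    unaryBlock (RBSC (-(Real.pi / 4)) * phaseGate ((Complex.exp (2 * Real.pi * Complex.I / n)) ^ k)) =
      ((Real.sqrt 2 : ℂ))⁻¹ •
        !![1, (Complex.exp (2 * Real.pi * Complex.I / n)) ^ k;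
           1, -((Complex.exp (2 * Real.pi * Complex.I / n)) ^ k)] := by
  have h2 : (Real.sqrt 2 : ℂ) ≠ 0 := by
    exact_mod_cast Real.sqrt_ne_zero'.2 (by norm_num)
  have hsq : (Real.sqrt 2 : ℂ) * (Real.sqrt 2 : ℂ) = 2 := by
    rw [← Complex.ofReal_mul, Real.mul_self_sqrt (by norm_num)]
    norm_num
  have hdiv : (Real.sqrt 2 : ℂ) / 2 = ((Real.sqrt 2 : ℂ))⁻¹ := by
    field_simp
    linear_combination hsq
  have hc : ((Real.cos (-(Real.pi/4)) : ℝ) : ℂ) = ((Real.sqrt 2 : ℂ))⁻¹ := by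
    rw [Real.cos_neg, Real.cos_pi_div_four]
    push_cast
    exact hdiv
  have hs : ((Real.sin (-(Real.pi/4)) : ℝ) : ℂ) = -((Real.sqrt 2 : ℂ))⁻¹ := by
    rw [Real.sin_neg, Real.sin_pi_div_four]
    push_cast
    rw [hdiv]
  ext i j
  fin_cases i <;> fin_cases j <;>
    simp [unaryBlock, RBSC, phaseGate, Matrix.mul_apply, Fin.sum_univ_succ, hc, hs, ← hdiv] <;>
    ring
end

section
/- Suppose P(θ) is a product of RBS gates P(θ) = G_M(θ_M)···G_1(θ_1) on n qubits, and U_Z is a tensor product of Z gates applied to a set S of qubits such that every RBS gate G_m acts on exactly one qubit in S. Then U_Z · P(θ) = P(−θ) · U_Z, where P(−θ) denotes the same circuit with all angles negated. -/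
open Matrix Finset

noncomputable def RBS (θ : ℝ) : Matrix (Fin 4) (Fin 4) ℝ :=
  !![1, 0, 0, 0;
     0, Real.cos θ, Real.sin θ, 0;
     0, -Real.sin θ, Real.cos θ, 0;
     0, 0, 0, 1]

def pairIdx (a b : Fin 2) : Fin 4 := ⟨2 * a.val + b.val, by omega⟩

/-- The RBS(θ) gate applied to qubits p and q of an n-qubit register (identity elsewhere). -/
noncomputable def rbsGate (n : ℕ) (p q : Fin n) (θ : ℝ) :
    Matrix (Fin n → Fin 2) (Fin n → Fin 2) ℝ :=
  fun x y =>
    if ∀ i, i ≠ p → i ≠ q → x i = y i then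
      RBS θ (pairIdx (x p) (x q)) (pairIdx (y p) (y q))
    else 0

/-- A circuit given by a list of gates, each an RBS gate on a pair of qubits with an angle.
The list is ordered so that `circuit L = G_M(θ_M) ⋯ G_1(θ_1)` with `L = [(g_M), …, (g_1)]`. -/
noncomputable def circuit (n : ℕ) (L : List ((Fin n × Fin n) × ℝ)) :
    Matrix (Fin n → Fin 2) (Fin n → Fin 2) ℝ :=
  (L.map (fun g => rbsGate n g.1.1 g.1.2 g.2)).prod

/-- U_Z: a Z gate applied to each qubit in S. -/
noncomputable def uZ (n : ℕ) (S : Finset (Fin n)) :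
    Matrix (Fin n → Fin 2) (Fin n → Fin 2) ℝ :=
  Matrix.diagonal (fun x => ∏ i ∈ S, if x i = 1 then (-1 : ℝ) else 1)

lemma key1 (θ : ℝ) (a b c d : Fin 2) :
    (if a = 1 then (-1:ℝ) else 1) * RBS θ (pairIdx a b) (pairIdx c d)
      = RBS (-θ) (pairIdx a b) (pairIdx c d) * (if c = 1 then (-1:ℝ) else 1) := by
  fin_cases a <;> fin_cases b <;> fin_cases c <;> fin_cases d <;>
    simp [RBS, pairIdx, Real.cos_neg, Real.sin_neg, Matrix.vecHead, Matrix.vecTail]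

lemma key2 (θ : ℝ) (a b c d : Fin 2) :
    (if b = 1 then (-1:ℝ) else 1) * RBS θ (pairIdx a b) (pairIdx c d)
      = RBS (-θ) (pairIdx a b) (pairIdx c d) * (if d = 1 then (-1:ℝ) else 1) := by
  fin_cases a <;> fin_cases b <;> fin_cases c <;> fin_cases d <;>
    simp [RBS, pairIdx, Real.cos_neg, Real.sin_neg, Matrix.vecHead, Matrix.vecTail]


lemma gate_comm (n : ℕ) (p q : Fin n) (θ : ℝ) (S : Finset (Fin n))
    (h : Xor' (p ∈ S) (q ∈ S)) :
    uZ n S * rbsGate n p q θ = rbsGate n p q (-θ) * uZ n S := by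
  ext x y
  rw [uZ, Matrix.diagonal_mul, Matrix.mul_diagonal]
  unfold rbsGate
  by_cases hc : ∀ i, i ≠ p → i ≠ q → x i = y i
  · rw [if_pos hc, if_pos hc]
    rcases h with ⟨hp, hq⟩ | ⟨hq, hp⟩
    · rw [← Finset.mul_prod_erase S _ hp, ← Finset.mul_prod_erase S _ hp]
      have : ∀ i ∈ S.erase p, (if x i = 1 then (-1:ℝ) else 1) = (if y i = 1 then (-1:ℝ) else 1) := by
        intro i hi
        rw [hc i (Finset.ne_of_mem_erase hi) (fun e => hq (e ▸ Finset.mem_of_mem_erase hi))]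
      rw [Finset.prod_congr rfl this]
      linear_combination (∏ i ∈ S.erase p, if y i = 1 then (-1:ℝ) else 1) *
        key1 θ (x p) (x q) (y p) (y q)
    · rw [← Finset.mul_prod_erase S _ hq, ← Finset.mul_prod_erase S _ hq]
      have : ∀ i ∈ S.erase q, (if x i = 1 then (-1:ℝ) else 1) = (if y i = 1 then (-1:ℝ) else 1) := by
        intro i hi
        rw [hc i (fun e => hp (e ▸ Finset.mem_of_mem_erase hi)) (Finset.ne_of_mem_erase hi)]
      rw [Finset.prod_congr rfl this]
      linear_combination (∏ i ∈ S.erase q, if y i = 1 then (-1:ℝ) else 1) *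
        key2 θ (x p) (x q) (y p) (y q)
  · simp [hc]

/-- If every RBS gate of the circuit P(θ) acts on exactly one qubit of S, then
U_Z · P(θ) = P(−θ) · U_Z, where P(−θ) is the same circuit with all angles negated. -/
theorem uZ_comm_circuit (n : ℕ) (L : List ((Fin n × Fin n) × ℝ)) (S : Finset (Fin n))
    (hS : ∀ g ∈ L, Xor' (g.1.1 ∈ S) (g.1.2 ∈ S)) :
    uZ n S * circuit n L = circuit n (L.map (fun g => (g.1, -g.2))) * uZ n S := by
  induction L with
  | nil => simp [circuit, uZ]
  | cons g L ih =>
    have hg := hS g List.mem_cons_self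
    have hL : ∀ g ∈ L, Xor' (g.1.1 ∈ S) (g.1.2 ∈ S) := fun g h => hS g (List.mem_cons_of_mem _ h)
    simp only [circuit, List.map_cons, List.prod_cons] at *
    rw [← mul_assoc, gate_comm n g.1.1 g.1.2 g.2 S hg, mul_assoc, ih hL, ← mul_assoc]
end
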